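/- Let r₁, …, r_n be i.i.d. ratings on {1,…,m} with distribution α and mean γ = Σ_k k·α_k, and let r̂ = (1/n)Σ_j r_j be the empirical average. For any ε > 0 and 0 < δ < 1, if n ≥ (3/ε²)·ln(2m/δ), then with probability at least 1 − δ, |r̂ − γ| ≤ ε·√(m·γ) + m·ε². -/

import Mathlib

open MeasureTheory ProbabilityTheory Finset

lemma exp_le_quad {u : ℝ} (hu : |u| ≤ 1) : Real.exp u ≤ 1 + u + (13/18) * u^2 := by
  have h := Real.exp_bound hu (n := 3) (by norm_num)
  have hs : ∑ m ∈ Finset.range 3, u ^ m / m.factorial = 1 + u + u^2/2 := by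
    norm_num [Finset.sum_range_succ, Nat.factorial]
  rw [hs] at h
  have h1 : Real.exp u - (1 + u + u^2/2) ≤ |u|^3 * ((3:ℕ).succ/((3:ℕ).factorial * 3)) :=
    (abs_sub_le_iff.1 h).1
  have h2 : |u|^3 ≤ u^2 := by
    have h3 : |u|^3 = |u| * |u|^2 := by ring
    rw [h3, sq_abs]
    nlinarith [sq_nonneg u, abs_nonneg u]
  have h4 : ((3:ℕ).succ/(((3:ℕ).factorial : ℝ) * 3)) = 2/9 := by norm_num [Nat.factorial]
  rw [h4] at h1
  nlinarith
lemma integrable_of_bdd {Ω : Type*} [MeasurableSpace Ω] {P : Measure Ω} [IsFiniteMeasure P]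
    {f : Ω → ℝ} (hf : Measurable f) (C : ℝ) (h : ∀ ω, |f ω| ≤ C) : Integrable f P :=
  (integrable_const C).mono' hf.aestronglyMeasurable
    (Filter.Eventually.of_forall (by simpa [Real.norm_eq_abs] using h))

lemma tail_bound {Ω : Type*} [MeasurableSpace Ω] (P : Measure Ω) [IsProbabilityMeasure P]
    (n : ℕ) (Z : Fin n → Ω → ℝ) (hZmeas : ∀ j, Measurable (Z j))
    (hZindep : iIndepFun Z P)
    (c V : ℝ) (hc : 0 ≤ c) (hV : 0 ≤ V)
    (hbdd : ∀ j ω, |Z j ω| ≤ c)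
    (hmean : ∀ j, ∫ ω, Z j ω ∂P = 0)
    (hvar : ∀ j, ∫ ω, (Z j ω)^2 ∂P ≤ V)
    (s : ℝ) (hs : 0 ≤ s) (hsc : s * c ≤ 1) (t : ℝ) :
    (P {ω | (n : ℝ) * t ≤ ∑ j, Z j ω}).toReal
      ≤ Real.exp ((n : ℝ) * ((13/18) * s^2 * V - s * t)) := by
  -- pointwise bound on exp (s * Z j ω)
  have hpt : ∀ j ω, Real.exp (s * Z j ω) ≤ 1 + s * Z j ω + (13/18) * s^2 * (Z j ω)^2 := by
    intro j ω
    have habs : |s * Z j ω| ≤ 1 := by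
      rw [abs_mul, abs_of_nonneg hs]
      exact le_trans (mul_le_mul_of_nonneg_left (hbdd j ω) hs) hsc
    have := exp_le_quad habs
    calc Real.exp (s * Z j ω) ≤ 1 + s * Z j ω + (13/18) * (s * Z j ω)^2 := this
      _ = 1 + s * Z j ω + (13/18) * s^2 * (Z j ω)^2 := by ring
  -- integrability facts
  have hZint : ∀ j, Integrable (Z j) P := fun j => integrable_of_bdd (hZmeas j) c (hbdd j)
  have hZsqint : ∀ j, Integrable (fun ω => (Z j ω)^2) P := fun j =>
    integrable_of_bdd ((hZmeas j).pow measurable_const) (c^2) (fun ω => by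
      rw [abs_of_nonneg (sq_nonneg _), ← sq_abs]
      exact pow_le_pow_left₀ (abs_nonneg _) (hbdd j ω) 2)
  have hexpint : ∀ j, Integrable (fun ω => Real.exp (s * Z j ω)) P := fun j =>
    integrable_of_bdd ((hZmeas j).const_mul s).exp (Real.exp 1) (fun ω => by
      rw [abs_of_nonneg (Real.exp_pos _).le]
      apply Real.exp_le_exp.2
      calc s * Z j ω ≤ |s * Z j ω| := le_abs_self _
        _ ≤ 1 := by
          rw [abs_mul, abs_of_nonneg hs]
          exact le_trans (mul_le_mul_of_nonneg_left (hbdd j ω) hs) hsc)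
  -- mgf of each Z j
  have hmgf : ∀ j, mgf (Z j) P s ≤ Real.exp ((13/18) * s^2 * V) := by
    intro j
    have h1 : mgf (Z j) P s ≤ ∫ ω, (1 + s * Z j ω + (13/18) * s^2 * (Z j ω)^2) ∂P := by
      refine integral_mono (hexpint j) ?_ (fun ω => hpt j ω)
      exact ((integrable_const 1).add ((hZint j).const_mul s)).add ((hZsqint j).const_mul _)
    have h2 : ∫ ω, (1 + s * Z j ω + (13/18) * s^2 * (Z j ω)^2) ∂P
        = 1 + (13/18) * s^2 * ∫ ω, (Z j ω)^2 ∂P := by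
      have hA : ∫ ω, (1 + s * Z j ω + (13/18) * s^2 * (Z j ω)^2) ∂P
          = (∫ ω, (1 + s * Z j ω) ∂P) + ∫ ω, (13/18) * s^2 * (Z j ω)^2 ∂P :=
        integral_add ((integrable_const 1).add ((hZint j).const_mul s)) ((hZsqint j).const_mul _)
      have hB : ∫ ω, (1 + s * Z j ω) ∂P = (∫ _ω : Ω, (1:ℝ) ∂P) + ∫ ω, s * Z j ω ∂P :=
        integral_add (integrable_const 1) ((hZint j).const_mul s)
      rw [hA, hB, integral_const, integral_const_mul, integral_const_mul, hmean j]
      simp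
    have h3 : 1 + (13/18) * s^2 * ∫ ω, (Z j ω)^2 ∂P ≤ 1 + (13/18) * s^2 * V := by
      have := hvar j
      nlinarith [sq_nonneg s]
    calc mgf (Z j) P s ≤ 1 + (13/18) * s^2 * V := le_trans h1 (h2 ▸ h3)
      _ ≤ Real.exp ((13/18) * s^2 * V) := by
        have := Real.add_one_le_exp ((13/18) * s^2 * V) ; linarith
  -- Chernoff on the sum
  have hsumfun : (fun ω => ∑ j, Z j ω) = ∑ j, Z j := by
    funext ω ; simp [Finset.sum_apply]
  have hsummeas : Measurable (fun ω => ∑ j, Z j ω) := by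
    exact Finset.measurable_sum _ (fun j _ => hZmeas j)
  have hsumint : Integrable (fun ω => Real.exp (s * (∑ j, Z j ω))) P := by
    refine integrable_of_bdd ((hsummeas.const_mul s).exp) (Real.exp (s * (n * c))) (fun ω => by
      rw [abs_of_nonneg (Real.exp_pos _).le]
      apply Real.exp_le_exp.2
      apply mul_le_mul_of_nonneg_left _ hs
      calc ∑ j, Z j ω ≤ ∑ j, |Z j ω| := Finset.sum_le_sum (fun j _ => le_abs_self _)
        _ ≤ ∑ _j : Fin n, c := Finset.sum_le_sum (fun j _ => hbdd j ω)
        _ = n * c := by simp [mul_comm])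
  have hcher := measure_ge_le_exp_mul_mgf (μ := P) (X := fun ω => ∑ j, Z j ω)
    ((n : ℝ) * t) hs hsumint
  have hmgfsum : mgf (fun ω => ∑ j, Z j ω) P s = ∏ j, mgf (Z j) P s := by
    rw [hsumfun] ; exact hZindep.mgf_sum hZmeas Finset.univ
  have hprod : ∏ j, mgf (Z j) P s ≤ Real.exp ((n:ℝ) * ((13/18) * s^2 * V)) := by
    calc ∏ j, mgf (Z j) P s ≤ ∏ _j : Fin n, Real.exp ((13/18) * s^2 * V) :=
        Finset.prod_le_prod (fun j _ => mgf_nonneg) (fun j _ => hmgf j)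
      _ = Real.exp ((n:ℝ) * ((13/18) * s^2 * V)) := by
        rw [Finset.prod_const, ← Real.exp_nat_mul] ; simp
  calc (P {ω | (n : ℝ) * t ≤ ∑ j, Z j ω}).toReal
      ≤ Real.exp (-s * ((n:ℝ) * t)) * mgf (fun ω => ∑ j, Z j ω) P s := hcher
    _ ≤ Real.exp (-s * ((n:ℝ) * t)) * Real.exp ((n:ℝ) * ((13/18) * s^2 * V)) := by
        rw [hmgfsum]
        exact mul_le_mul_of_nonneg_left hprod (Real.exp_pos _).le
    _ = Real.exp ((n : ℝ) * ((13/18) * s^2 * V - s * t)) := by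
        rw [← Real.exp_add] ; ring_nf

set_option maxHeartbeats 1000000 in
lemma key_exp_bound (m : ℕ) (hm : 0 < m) (n : ℕ) (V t ε δ : ℝ)
    (hV1 : 1 ≤ V) (hε : 0 < ε) (ht0 : 0 < t) (ht2 : ε^2 * V ≤ t^2) (htm : (m:ℝ) * ε^2 ≤ t)
    (hδ0 : 0 < δ) (hδ1 : δ < 1)
    (hn : 3 / ε ^ 2 * Real.log (2 * m / δ) ≤ (n : ℝ)) :
    ∃ s : ℝ, 0 ≤ s ∧ s * ((m : ℝ) - 1) ≤ 1 ∧
      Real.exp ((n : ℝ) * ((13/18) * s^2 * V - s * t)) ≤ δ/2 := by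
  have hm1 : (1 : ℝ) ≤ (m : ℝ) := by exact_mod_cast hm
  have hV0 : 0 < V := lt_of_lt_of_le one_pos hV1
  have hL0 : 0 < Real.log (2/δ) := Real.log_pos (by rw [lt_div_iff₀ hδ0]; linarith)
  have hLL : Real.log (2/δ) ≤ Real.log (2*m/δ) := by
    apply Real.log_le_log (by positivity)
    apply div_le_div_of_nonneg_right _ hδ0.le
    nlinarith
  have hnε : 3 * Real.log (2*m/δ) ≤ (n:ℝ) * ε^2 := by
    have hε2 : (0:ℝ) < ε^2 := pow_pos hε 2
    have := mul_le_mul_of_nonneg_right hn hε2.le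
    calc 3 * Real.log (2*m/δ) = 3 / ε^2 * Real.log (2*m/δ) * ε^2 := by
          field_simp
      _ ≤ (n:ℝ) * ε^2 := this
  have hn0' : (0:ℝ) ≤ (n:ℝ) := Nat.cast_nonneg n
  have hlogd2 : Real.log (δ/2) = - Real.log (2/δ) := by
    rw [show δ/2 = (2/δ)⁻¹ by field_simp, Real.log_inv]
  have key : ∃ s : ℝ, 0 ≤ s ∧ s * ((m:ℝ) - 1) ≤ 1 ∧
      Real.log (2/δ) ≤ (n:ℝ) * (s * t - (13/18) * s^2 * V) := by
    by_cases hcase : t * ((m:ℝ) - 1) ≤ 2 * (13/18) * V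
    · refine ⟨t / (2 * (13/18) * V), by positivity, ?_, ?_⟩
      · rw [div_mul_eq_mul_div, div_le_one (by positivity)]
        exact hcase
      · have hval : t / (2 * (13/18) * V) * t - (13/18) * (t / (2 * (13/18) * V))^2 * V
            = t^2 / (4 * (13/18) * V) := by
          field_simp
          ring
        rw [hval, show (n:ℝ) * (t^2 / (4 * (13/18) * V)) = ((n:ℝ) * t^2) / (4 * (13/18) * V)
          by ring, le_div_iff₀ (by positivity)]
        have hnt2 : 3 * Real.log (2/δ) * V ≤ (n:ℝ) * t^2 := by
          calc 3 * Real.log (2/δ) * V ≤ 3 * Real.log (2*m/δ) * V := by nlinarith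
            _ ≤ (n:ℝ) * ε^2 * V := by nlinarith
            _ ≤ (n:ℝ) * t^2 := by
                rw [mul_assoc]
                exact mul_le_mul_of_nonneg_left ht2 hn0'
        nlinarith
    · push_neg at hcase
      have hm2 : (0:ℝ) < (m:ℝ) - 1 := by
        by_contra h
        push_neg at h
        have : t * ((m:ℝ) - 1) ≤ 0 := mul_nonpos_of_nonneg_of_nonpos ht0.le h
        nlinarith
      refine ⟨1 / ((m:ℝ) - 1), by positivity, by field_simp; norm_num, ?_⟩
      have hA : (13/18) * (1/((m:ℝ)-1))^2 * V ≤ t / (2*((m:ℝ)-1)) := by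
        rw [show (13/18) * (1/((m:ℝ)-1))^2 * V = ((13/18) * V) / (((m:ℝ)-1)^2) by
          field_simp, div_le_div_iff₀ (by positivity) (by positivity)]
        nlinarith
      have hB : t / (2*((m:ℝ)-1)) ≤ 1/((m:ℝ)-1) * t - (13/18) * (1/((m:ℝ)-1))^2 * V := by
        have he : 1/((m:ℝ)-1) * t - t/(2*((m:ℝ)-1)) = t/(2*((m:ℝ)-1)) := by
          field_simp
          ring
        linarith
      have hnt : 2*((m:ℝ)-1) * Real.log (2/δ) ≤ (n:ℝ) * t := by
        have h1 : (n:ℝ) * ((m:ℝ)*ε^2) ≤ (n:ℝ) * t := mul_le_mul_of_nonneg_left htm hn0'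
        nlinarith
      have hfin : Real.log (2/δ) ≤ (n:ℝ) * (t / (2*((m:ℝ)-1))) := by
        rw [show (n:ℝ) * (t / (2*((m:ℝ)-1))) = ((n:ℝ) * t) / (2*((m:ℝ)-1)) by ring,
          le_div_iff₀ (by positivity)]
        nlinarith
      have := mul_le_mul_of_nonneg_left hB hn0'
      linarith
  obtain ⟨s, hs0, hsc, hkey⟩ := key
  refine ⟨s, hs0, hsc, ?_⟩
  have he : (n:ℝ) * ((13/18)*s^2*V - s*t) = -((n:ℝ) * (s*t - (13/18)*s^2*V)) := by ring
  have hle : (n:ℝ) * ((13/18)*s^2*V - s*t) ≤ Real.log (δ/2) := by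
    rw [he, hlogd2]
    linarith
  calc Real.exp ((n:ℝ) * ((13/18)*s^2*V - s*t)) ≤ Real.exp (Real.log (δ/2)) :=
      Real.exp_le_exp.2 hle
    _ = δ/2 := Real.exp_log (by linarith)

section helpers
lemma integral_comp_fin {Ω : Type*} [MeasurableSpace Ω] (P : Measure Ω) [IsProbabilityMeasure P]
    {m : ℕ} (ρ : Ω → Fin m) (hρ : Measurable ρ) (α : Fin m → ℝ) (hα : ∀ k, 0 ≤ α k)
    (hdist : ∀ k, P {ω | ρ ω = k} = ENNReal.ofReal (α k)) (g : Fin m → ℝ) :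
    ∫ ω, g (ρ ω) ∂P = ∑ k, α k * g k := by
  have hg : Measurable g := measurable_of_countable g
  have hmap : IsProbabilityMeasure (P.map ρ) := Measure.isProbabilityMeasure_map hρ.aemeasurable
  have h1 : ∫ ω, g (ρ ω) ∂P = ∫ x, g x ∂(P.map ρ) :=
    (integral_map hρ.aemeasurable hg.aestronglyMeasurable).symm
  rw [h1, integral_fintype (.of_finite)]
  refine Finset.sum_congr rfl (fun k _ => ?_)
  rw [Measure.real, Measure.map_apply hρ (measurableSet_singleton k)]
  have : ρ ⁻¹' {k} = {ω | ρ ω = k} := rfl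
  rw [this, hdist k, ENNReal.toReal_ofReal (hα k), smul_eq_mul]
end helpers

/-- Average scoring rule, honest case: with `n` i.i.d. categorical ratings on `{1,…,m}`
(encoded as `Fin m`, index `k` standing for value `k+1`), mean `γ = ∑_k (k+1)α_k` and
empirical average `r̂ = (1/n)∑_j r_j`, if `n ≥ (3/ε²)·ln(2m/δ)` then with probability at
least `1 - δ`, `|r̂ - γ| ≤ ε√(mγ) + mε²`. -/
theorem average_scoring_honest
    {Ω : Type*} [MeasurableSpace Ω] (P : Measure Ω) [IsProbabilityMeasure P]
    (m n : ℕ) (hm : 0 < m) (hn0 : 0 < n) (α : Fin m → ℝ) (r : Fin n → Ω → Fin m)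
    (hmeas : ∀ j, Measurable (r j))
    (hindep : iIndepFun r P)
    (hdist : ∀ j k, P {ω | r j ω = k} = ENNReal.ofReal (α k))
    (hα_nonneg : ∀ k, 0 ≤ α k) (hα_sum : ∑ k, α k = 1)
    (γ : ℝ) (hγ : γ = ∑ k : Fin m, ((k : ℕ) + 1 : ℝ) * α k)
    (ε δ : ℝ) (hε : 0 < ε) (hδ0 : 0 < δ) (hδ1 : δ < 1)
    (hn : 3 / ε ^ 2 * Real.log (2 * m / δ) ≤ (n : ℝ)) :
    1 - δ ≤ (P {ω |
      |(∑ j, ((r j ω : ℕ) + 1 : ℝ)) / n - γ| ≤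
        ε * Real.sqrt (m * γ) + m * ε ^ 2}).toReal := by
  have hm1 : (1 : ℝ) ≤ (m : ℝ) := by exact_mod_cast hm
  have hnR : (0:ℝ) < (n:ℝ) := by exact_mod_cast hn0
  -- value bounds for each category
  have hgle : ∀ k : Fin m, ((k : ℕ) : ℝ) + 1 ≤ (m : ℝ) := by
    intro k
    have : (k : ℕ) + 1 ≤ m := k.isLt
    exact_mod_cast this
  have hgge : ∀ k : Fin m, (1:ℝ) ≤ ((k : ℕ) : ℝ) + 1 := by
    intro k
    have : (0:ℝ) ≤ ((k:ℕ):ℝ) := Nat.cast_nonneg _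
    linarith
  -- γ bounds
  have hγ1 : 1 ≤ γ := by
    rw [hγ, ← hα_sum]
    exact Finset.sum_le_sum (fun k _ => by nlinarith [hα_nonneg k, hgge k])
  have hγm : γ ≤ (m:ℝ) := by
    rw [hγ]
    calc ∑ k : Fin m, (((k:ℕ):ℝ) + 1) * α k ≤ ∑ k : Fin m, (m:ℝ) * α k :=
        Finset.sum_le_sum (fun k _ => by nlinarith [hα_nonneg k, hgle k])
      _ = (m:ℝ) := by rw [← Finset.mul_sum, hα_sum, mul_one]
  -- centered variables
  set Z : Fin n → Ω → ℝ := fun j => (fun k : Fin m => ((k:ℕ):ℝ) + 1 - γ) ∘ r j with hZdef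
  have hZmeas : ∀ j, Measurable (Z j) := fun j =>
    (measurable_of_countable _).comp (hmeas j)
  have hZindep : iIndepFun Z P :=
    hindep.comp _ (fun _ => measurable_of_countable _)
  have hZbdd : ∀ j ω, |Z j ω| ≤ (m:ℝ) - 1 := by
    intro j ω
    rw [abs_le]
    constructor
    · have := hgge (r j ω) ; simp only [hZdef, Function.comp_apply] ; linarith
    · have := hgle (r j ω) ; simp only [hZdef, Function.comp_apply] ; linarith
  have hZmean : ∀ j, ∫ ω, Z j ω ∂P = 0 := by
    intro j
    have h1 : ∫ ω, Z j ω ∂P = ∑ k, α k * (((k:ℕ):ℝ) + 1 - γ) :=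
      integral_comp_fin P (r j) (hmeas j) α hα_nonneg (hdist j)
        (fun k => ((k:ℕ):ℝ) + 1 - γ)
    rw [h1]
    have h2 : ∑ k, α k * (((k:ℕ):ℝ) + 1 - γ)
        = (∑ k : Fin m, (((k:ℕ):ℝ) + 1) * α k) - γ * ∑ k, α k := by
      rw [Finset.mul_sum]
      rw [← Finset.sum_sub_distrib]
      exact Finset.sum_congr rfl (fun k _ => by ring)
    rw [h2, ← hγ, hα_sum]
    ring
  have hZvar : ∀ j, ∫ ω, (Z j ω)^2 ∂P ≤ (m:ℝ) * γ := by
    intro j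
    have h1 : ∫ ω, (Z j ω)^2 ∂P = ∑ k, α k * ((((k:ℕ):ℝ) + 1 - γ))^2 :=
      integral_comp_fin P (r j) (hmeas j) α hα_nonneg (hdist j)
        (fun k => (((k:ℕ):ℝ) + 1 - γ)^2)
    rw [h1]
    have h2 : ∑ k, α k * ((((k:ℕ):ℝ) + 1 - γ))^2
        = (∑ k : Fin m, α k * (((k:ℕ):ℝ) + 1)^2)
          - 2*γ*(∑ k : Fin m, (((k:ℕ):ℝ) + 1) * α k) + γ^2 * ∑ k, α k := by
      rw [Finset.mul_sum, Finset.mul_sum, ← Finset.sum_sub_distrib, ← Finset.sum_add_distrib]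
      exact Finset.sum_congr rfl (fun k _ => by ring)
    have h3 : ∑ k : Fin m, α k * (((k:ℕ):ℝ) + 1)^2
        ≤ (m:ℝ) * ∑ k : Fin m, (((k:ℕ):ℝ) + 1) * α k := by
      rw [Finset.mul_sum]
      refine Finset.sum_le_sum (fun k _ => ?_)
      nlinarith [mul_le_mul_of_nonneg_right (hgle k)
        (mul_nonneg (hα_nonneg k) (le_trans zero_le_one (hgge k)))]
    rw [h2, ← hγ, hα_sum]
    nlinarith [sq_nonneg γ]
  -- parameters
  set V : ℝ := (m:ℝ) * γ with hVdef
  set t : ℝ := ε * Real.sqrt ((m:ℝ) * γ) + (m:ℝ) * ε^2 with htdef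
  have hV1 : 1 ≤ V := one_le_mul_of_one_le_of_one_le hm1 hγ1
  have hV0 : 0 < V := lt_of_lt_of_le one_pos hV1
  have hsqrt1 : 1 ≤ Real.sqrt V := by
    rw [show (1:ℝ) = Real.sqrt 1 by simp]
    exact Real.sqrt_le_sqrt hV1
  have ht0 : 0 < t := by
    have h1 : 0 < ε * Real.sqrt V := mul_pos hε (lt_of_lt_of_le one_pos hsqrt1)
    have h2 : 0 < (m:ℝ) * ε^2 := mul_pos (lt_of_lt_of_le one_pos hm1) (pow_pos hε 2)
    simp only [htdef, ← hVdef]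
    linarith
  have ht2 : ε^2 * V ≤ t^2 := by
    have h1 : ε * Real.sqrt V ≤ t := by
      have h2 : (0:ℝ) ≤ (m:ℝ) * ε^2 := by positivity
      simp only [htdef, ← hVdef]
      linarith
    have h3 : (ε * Real.sqrt V)^2 = ε^2 * V := by
      rw [mul_pow, Real.sq_sqrt hV0.le]
    calc ε^2 * V = (ε * Real.sqrt V)^2 := h3.symm
      _ ≤ t^2 := by
          apply pow_le_pow_left₀ (by positivity) h1
  have htm : (m:ℝ) * ε^2 ≤ t := by
    have : (0:ℝ) ≤ ε * Real.sqrt V := by positivity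
    simp only [htdef, ← hVdef]
    linarith
  obtain ⟨s, hs0, hsc, hexp⟩ := key_exp_bound m hm n V t ε δ hV1 hε ht0 ht2 htm hδ0 hδ1 hn
  -- tail bounds
  have hc0 : (0:ℝ) ≤ (m:ℝ) - 1 := by linarith
  have hPA := tail_bound P n Z hZmeas hZindep ((m:ℝ)-1) V hc0 hV0.le hZbdd hZmean hZvar
    s hs0 hsc t
  have hPB := tail_bound P n (fun j ω => -(Z j ω))
    (fun j => (hZmeas j).neg)
    (hZindep.comp (fun _ => fun x => -x) (fun _ => measurable_neg))
    ((m:ℝ)-1) V hc0 hV0.le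
    (fun j ω => by rw [abs_neg]; exact hZbdd j ω)
    (fun j => by rw [integral_neg, hZmean j, neg_zero])
    (fun j => by simpa using hZvar j)
    s hs0 hsc t
  -- sums
  set S : Ω → ℝ := fun ω => ∑ j, (((r j ω : ℕ) : ℝ) + 1) with hSdef
  have hSmeas : Measurable S := by
    apply Finset.measurable_sum
    intro j _
    exact (measurable_of_countable (fun k : Fin m => ((k:ℕ):ℝ) + 1)).comp (hmeas j)
  have hZS : ∀ ω, ∑ j, Z j ω = S ω - (n:ℝ) * γ := by
    intro ω
    simp only [hZdef, Function.comp_apply, hSdef]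
    rw [Finset.sum_sub_distrib]
    simp [Finset.card_univ, mul_comm]
  -- the event
  set E : Set Ω := {ω | |S ω / (n:ℝ) - γ| ≤ t} with hEdef
  have hEmeas : MeasurableSet E :=
    measurableSet_le ((hSmeas.div_const _).sub measurable_const).abs measurable_const
  set A : Set Ω := {ω | (n:ℝ) * t ≤ ∑ j, Z j ω} with hAdef
  set B : Set Ω := {ω | (n:ℝ) * t ≤ ∑ j, -(Z j ω)} with hBdef
  have hsub : Eᶜ ⊆ A ∪ B := by
    intro ω hω
    simp only [hEdef, Set.mem_compl_iff, Set.mem_setOf_eq, not_le] at hω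
    have h1 : S ω / (n:ℝ) - γ = (S ω - (n:ℝ)*γ) / (n:ℝ) := by field_simp
    rw [h1, abs_div, abs_of_pos hnR, lt_div_iff₀ hnR] at hω
    rcases lt_abs.1 (by linarith [hω] : (n:ℝ)*t < |S ω - (n:ℝ)*γ|) with h | h
    · left
      simp only [hAdef, Set.mem_setOf_eq, hZS ω]
      linarith
    · right
      simp only [hBdef, Set.mem_setOf_eq]
      have h2 : ∑ j, -(Z j ω) = -(∑ j, Z j ω) := by rw [Finset.sum_neg_distrib]
      rw [h2, hZS ω]
      linarith
  -- combine
  have hunion : P Eᶜ ≤ P A + P B := le_trans (measure_mono hsub) (measure_union_le A B)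
  have htr : (P Eᶜ).toReal ≤ (P A).toReal + (P B).toReal := by
    calc (P Eᶜ).toReal ≤ (P A + P B).toReal :=
        ENNReal.toReal_mono (by finiteness) hunion
      _ = (P A).toReal + (P B).toReal := ENNReal.toReal_add (measure_ne_top _ _) (measure_ne_top _ _)
  have hAB : (P A).toReal + (P B).toReal ≤ δ := by
    have := le_trans hPA hexp
    have := le_trans hPB hexp
    simp only [hAdef, hBdef] at *
    linarith
  have hcompl : (P Eᶜ).toReal = 1 - (P E).toReal := by
    rw [prob_compl_eq_one_sub hEmeas,
      ENNReal.toReal_sub_of_le prob_le_one ENNReal.one_ne_top, ENNReal.toReal_one]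
  have hgoal : 1 - δ ≤ (P E).toReal := by linarith [htr, hAB, hcompl.symm.le, hcompl.le]
  convert hgoal using 3
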